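/- Let θ ∈ (π/2, π), α ∈ (1, 2), γ ∈ (0, 1) and β ∈ (0, 1). There exists a constant c > 0, depending only on θ, α, γ, β, such that for all κ > 0 and all t > 0 with κ t ≤ 1 one has ∫₀ᵗ s^{β−1} ( ∫_κ^∞ e^{r s cos θ} r^{β−2α−2γ} dr + κ^{1+β−2α−2γ} ∫_{−θ}^{θ} e^{κ s cos φ} dφ ) ds ≤ c κ^{1−2α−2γ}. -/

import Mathlib

open Set MeasureTheory

theorem contour_kernel_square_integral_estimate
    (θ α γ β : ℝ) (hθ : θ ∈ Ioo (Real.pi / 2) Real.pi)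
    (hα : α ∈ Ioo (1 : ℝ) 2) (hγ : γ ∈ Ioo (0 : ℝ) 1) (hβ : β ∈ Ioo (0 : ℝ) 1) :
    ∃ c > (0 : ℝ), ∀ κ t : ℝ, 0 < κ → 0 < t → κ * t ≤ 1 →
      (∫ s in Ioc (0 : ℝ) t, s ^ (β - 1) *
        ((∫ r in Ioi κ, Real.exp (r * s * Real.cos θ) * r ^ (β - 2 * α - 2 * γ)) +
          κ ^ (1 + β - 2 * α - 2 * γ) *
            ∫ φ in (-θ)..θ, Real.exp (κ * s * Real.cos φ))) ≤
      c * κ ^ (1 - 2 * α - 2 * γ) := by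
  obtain ⟨hθ1, hθ2⟩ := hθ
  obtain ⟨hα1, hα2⟩ := hα
  obtain ⟨hγ1, hγ2⟩ := hγ
  obtain ⟨hβ1, hβ2⟩ := hβ
  have hπ := Real.pi_pos
  have hθpos : 0 < θ := lt_trans (by positivity) hθ1
  have hcos : Real.cos θ < 0 := Real.cos_neg_of_pi_div_two_lt_of_lt hθ1 (by linarith)
  have hplt : β - 2 * α - 2 * γ < -1 := by linarith
  have hden : 0 < 2 * α + 2 * γ - β - 1 := by linarith
  set C : ℝ := 1 / (2 * α + 2 * γ - β - 1) + 2 * θ * Real.exp 1 with hC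
  have hCpos : 0 < C := by
    rw [hC]
    have h1 : 0 < 1 / (2 * α + 2 * γ - β - 1) := by positivity
    have h2 : 0 < 2 * θ * Real.exp 1 := by positivity
    linarith
  refine ⟨C / β, by positivity, ?_⟩
  intro κ t hκ ht hκt
  -- pointwise bounds on the inner integrals for s ∈ Ioc 0 t
  have hI1 : ∀ s : ℝ, s ∈ Ioc (0 : ℝ) t →
      (∫ r in Ioi κ, Real.exp (r * s * Real.cos θ) * r ^ (β - 2 * α - 2 * γ)) ≤
        κ ^ (1 + β - 2 * α - 2 * γ) * (1 / (2 * α + 2 * γ - β - 1)) := by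
    intro s hs
    have hle : (∫ r in Ioi κ, Real.exp (r * s * Real.cos θ) * r ^ (β - 2 * α - 2 * γ)) ≤
        ∫ r in Ioi κ, r ^ (β - 2 * α - 2 * γ) := by
      apply integral_mono_of_nonneg
      · filter_upwards [ae_restrict_mem measurableSet_Ioi] with r hr
        have hr0 : 0 < r := hκ.trans hr
        positivity
      · exact integrableOn_Ioi_rpow_of_lt hplt hκ
      · filter_upwards [ae_restrict_mem measurableSet_Ioi] with r hr
        have hr0 : 0 < r := hκ.trans hr
        have hexp : Real.exp (r * s * Real.cos θ) ≤ 1 := by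
          rw [Real.exp_le_one_iff]
          have : 0 < r * s := mul_pos hr0 hs.1
          nlinarith
        calc Real.exp (r * s * Real.cos θ) * r ^ (β - 2 * α - 2 * γ)
            ≤ 1 * r ^ (β - 2 * α - 2 * γ) := by
              apply mul_le_mul_of_nonneg_right hexp (Real.rpow_nonneg hr0.le _)
          _ = r ^ (β - 2 * α - 2 * γ) := one_mul _
    rw [integral_Ioi_rpow_of_lt hplt hκ] at hle
    have heq : -κ ^ (β - 2 * α - 2 * γ + 1) / (β - 2 * α - 2 * γ + 1) =
        κ ^ (1 + β - 2 * α - 2 * γ) * (1 / (2 * α + 2 * γ - β - 1)) := by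
      rw [show (1 + β - 2 * α - 2 * γ) = (β - 2 * α - 2 * γ + 1) by ring]
      have h1 : β - 2 * α - 2 * γ + 1 ≠ 0 := by linarith
      have h2 : 2 * α + 2 * γ - β - 1 ≠ 0 := by linarith
      generalize κ ^ (β - 2 * α - 2 * γ + 1) = X
      rw [show 2 * α + 2 * γ - β - 1 = -(β - 2 * α - 2 * γ + 1) by ring,
        mul_one_div, div_neg, neg_div]
    linarith [heq ▸ hle]
  have hI2 : ∀ s : ℝ, s ∈ Ioc (0 : ℝ) t →
      (∫ φ in (-θ)..θ, Real.exp (κ * s * Real.cos φ)) ≤ 2 * θ * Real.exp 1 := by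
    intro s hs
    have hκs : κ * s ≤ 1 := le_trans (by nlinarith [hs.2, hκ.le]) hκt
    have hκs0 : 0 ≤ κ * s := (mul_pos hκ hs.1).le
    have hle : (∫ φ in (-θ)..θ, Real.exp (κ * s * Real.cos φ)) ≤
        ∫ _ in (-θ)..θ, Real.exp 1 := by
      apply intervalIntegral.integral_mono_on (by linarith)
      · exact (Real.continuous_exp.comp (continuous_const.mul Real.continuous_cos)).intervalIntegrable _ _
      · exact intervalIntegrable_const
      · intro x _
        apply Real.exp_le_exp.mpr
        nlinarith [Real.cos_le_one x, mul_pos hκ hs.1]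
    rw [intervalIntegral.integral_const, smul_eq_mul,
      show θ - -θ = 2 * θ by ring] at hle
    linarith
  -- main estimate
  have hκp : (0:ℝ) < κ ^ (1 + β - 2 * α - 2 * γ) := Real.rpow_pos_of_pos hκ _
  calc (∫ s in Ioc (0 : ℝ) t, s ^ (β - 1) *
        ((∫ r in Ioi κ, Real.exp (r * s * Real.cos θ) * r ^ (β - 2 * α - 2 * γ)) +
          κ ^ (1 + β - 2 * α - 2 * γ) *
            ∫ φ in (-θ)..θ, Real.exp (κ * s * Real.cos φ)))
      ≤ ∫ s in Ioc (0 : ℝ) t, s ^ (β - 1) * (κ ^ (1 + β - 2 * α - 2 * γ) * C) := by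
        apply integral_mono_of_nonneg
        · filter_upwards [ae_restrict_mem measurableSet_Ioc] with s hs
          have hs0 : 0 < s := hs.1
          have h1 : 0 ≤ ∫ r in Ioi κ, Real.exp (r * s * Real.cos θ) * r ^ (β - 2 * α - 2 * γ) := by
            apply setIntegral_nonneg measurableSet_Ioi
            intro r hr
            have : 0 < r := hκ.trans hr
            positivity
          have h2 : 0 ≤ ∫ φ in (-θ)..θ, Real.exp (κ * s * Real.cos φ) :=
            intervalIntegral.integral_nonneg (by linarith) (fun x _ => (Real.exp_pos _).le)
          have h3 : (0:ℝ) ≤ s ^ (β - 1) := Real.rpow_nonneg hs0.le _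
          positivity
        · have : IntervalIntegrable (fun s : ℝ => s ^ (β - 1) * (κ ^ (1 + β - 2 * α - 2 * γ) * C))
              volume 0 t :=
            (intervalIntegral.intervalIntegrable_rpow' (by linarith)).mul_const _
          exact (intervalIntegrable_iff_integrableOn_Ioc_of_le ht.le).mp this
        · filter_upwards [ae_restrict_mem measurableSet_Ioc] with s hs
          have h3 : (0:ℝ) ≤ s ^ (β - 1) := Real.rpow_nonneg hs.1.le _
          apply mul_le_mul_of_nonneg_left _ h3
          have := hI1 s hs
          have := hI2 s hs
          rw [hC]
          nlinarith [hκp]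
    _ = κ ^ (1 + β - 2 * α - 2 * γ) * C * (t ^ β / β) := by
        rw [← intervalIntegral.integral_of_le ht.le,
          intervalIntegral.integral_mul_const,
          integral_rpow (Or.inl (by linarith))]
        rw [Real.zero_rpow (by linarith : β - 1 + 1 ≠ 0)]
        rw [show β - 1 + 1 = β by ring]
        ring
    _ ≤ C / β * κ ^ (1 - 2 * α - 2 * γ) := by
        have hsplit : κ ^ (1 + β - 2 * α - 2 * γ) =
            κ ^ (1 - 2 * α - 2 * γ) * κ ^ β := by
          rw [← Real.rpow_add hκ]; ring_nf
        have hmul : κ ^ β * t ^ β ≤ 1 := by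
          rw [← Real.mul_rpow hκ.le ht.le]
          exact Real.rpow_le_one (by positivity) hκt (by linarith)
        have hk1 : (0:ℝ) < κ ^ (1 - 2 * α - 2 * γ) := Real.rpow_pos_of_pos hκ _
        have hβ0 : (0:ℝ) < β := hβ1
        have key : κ ^ (1 - 2 * α - 2 * γ) * κ ^ β * C * t ^ β ≤
            C * κ ^ (1 - 2 * α - 2 * γ) := by
          have h := mul_le_mul_of_nonneg_left hmul (mul_pos hCpos hk1).le
          nlinarith [h]
        have hβinv : (0:ℝ) ≤ β⁻¹ := by positivity
        calc κ ^ (1 + β - 2 * α - 2 * γ) * C * (t ^ β / β)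
            = (κ ^ (1 - 2 * α - 2 * γ) * κ ^ β * C * t ^ β) * β⁻¹ := by
              rw [hsplit]; ring
          _ ≤ (C * κ ^ (1 - 2 * α - 2 * γ)) * β⁻¹ :=
              mul_le_mul_of_nonneg_right key hβinv
          _ = C / β * κ ^ (1 - 2 * α - 2 * γ) := by ring
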